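/- Let P be a poset of type A with at least two maximal elements. Then there exists a maximal element z of P that has exactly one neighbor, i.e., there is exactly one maximal element z' ≠ z with D(z) ∩ D(z') ≠ ∅. -/

import Mathlib

/-! ## Relation-based poset notions -/

/-- `x` and `y` are incomparable with respect to the relation `le`. -/
def RIncomp {α : Type*} (le : α → α → Prop) (x y : α) : Prop := ¬ le x y ∧ ¬ le y x

/-- The strict relation associated to `le`. -/
def RLt {α : Type*} (le : α → α → Prop) (x y : α) : Prop := le x y ∧ ¬ le y x

/-- `z` is a maximal element with respect to `le`. -/
def RIsMax {α : Type*} (le : α → α → Prop) (z : α) : Prop := ∀ x, le z x → le x z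

/-- `z` is a minimal element with respect to `le`. -/
def RIsMin {α : Type*} (le : α → α → Prop) (z : α) : Prop := ∀ x, le x z → le z x

/-- The down-cone `D(a) = {x | x ≤ a}`. -/
def RDown {α : Type*} (le : α → α → Prop) (a : α) : Set α := {x | le x a}

/-- The comparability graph of the relation `le`: vertices are the elements,
edges join comparable distinct elements. -/
def RCompGraph {α : Type*} (le : α → α → Prop) : SimpleGraph α where
  Adj x y := x ≠ y ∧ (le x y ∨ le y x)
  symm := ⟨fun x y h => ⟨Ne.symm h.1, h.2.symm⟩⟩
  loopless := ⟨fun x h => h.1 rfl⟩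

/-- Connectedness of the comparability graph. -/
def RConnected {α : Type*} (le : α → α → Prop) : Prop := (RCompGraph le).Connected

/-- `P` contains `R1` as a peak-subposet: a maximal element `z` together with three
distinct pairwise incomparable elements strictly below `z`. -/
def ContainsR1 {α : Type*} (le : α → α → Prop) : Prop :=
  ∃ z a b c : α, RIsMax le z ∧ a ≠ b ∧ a ≠ c ∧ b ≠ c ∧
    RIncomp le a b ∧ RIncomp le a c ∧ RIncomp le b c ∧
    RLt le a z ∧ RLt le b z ∧ RLt le c z

/-- `P` contains `R2` as a peak-subposet: distinct maximal `z ≠ z'` and elements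
`y < x` with `x < z` and `x < z'`. -/
def ContainsR2 {α : Type*} (le : α → α → Prop) : Prop :=
  ∃ z z' y x : α, RIsMax le z ∧ RIsMax le z' ∧ z ≠ z' ∧
    RLt le y x ∧ RLt le x z ∧ RLt le x z'

/-- `P` contains `R3` as a peak-subposet: three distinct maximal elements with a
common strict lower bound. -/
def ContainsR3 {α : Type*} (le : α → α → Prop) : Prop :=
  ∃ z₁ z₂ z₃ x : α, RIsMax le z₁ ∧ RIsMax le z₂ ∧ RIsMax le z₃ ∧
    z₁ ≠ z₂ ∧ z₁ ≠ z₃ ∧ z₂ ≠ z₃ ∧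
    RLt le x z₁ ∧ RLt le x z₂ ∧ RLt le x z₃

/-- `P` contains the crown `R_{4,n}` as a peak-subposet (with `m = n + 2` maximal
elements `z i` and `m` pairwise incomparable elements `x i`, indices mod `m`). -/
def ContainsCrown {α : Type*} (le : α → α → Prop) (n : ℕ) : Prop :=
  ∃ z x : Fin (n + 2) → α,
    Function.Injective z ∧ Function.Injective x ∧
    (∀ j, RIsMax le (z j)) ∧
    (∀ i j, x i ≠ z j) ∧
    (∀ i j, i ≠ j → RIncomp le (x i) (x j)) ∧
    (∀ i j, RLt le (x i) (z j) ↔ (j = i ∨ j = i - 1))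

/-- A poset (given by its order relation `le`) is of type `A`: it is connected and
contains none of `R1`, `R2`, `R3` and the crowns `R_{4,n}` as a peak-subposet. -/
def IsTypeA {α : Type*} (le : α → α → Prop) : Prop :=
  RConnected le ∧ ¬ ContainsR1 le ∧ ¬ ContainsR2 le ∧ ¬ ContainsR3 le ∧
    ∀ n : ℕ, ¬ ContainsCrown le n

/-- The set of neighbors of a maximal element `z`: maximal elements `z' ≠ z` whose
down-cone meets the down-cone of `z`. -/
def NeighborSet {α : Type*} (le : α → α → Prop) (z : α) : Set α :=
  {z' | RIsMax le z' ∧ z' ≠ z ∧ (RDown le z ∩ RDown le z').Nonempty}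

/-! ## Quivers of type `A_n` and alien sets -/

/-- A quiver of type `A_n`: vertices `Fin n`, and for each pair of consecutive
vertices exactly one arrow joining them (in one of the two orientations), and no
other arrows. -/
structure TypeAQuiver (n : ℕ) where
  arr : Fin n → Fin n → Prop
  adjacent : ∀ x y : Fin n, arr x y → (y.val = x.val + 1 ∨ x.val = y.val + 1)
  exactlyOne : ∀ x y : Fin n, y.val = x.val + 1 → (arr x y ↔ ¬ arr y x)

/-- `z` is a sink: no arrow starts at `z`. -/
def IsSinkQ {n : ℕ} (Q : TypeAQuiver n) (z : Fin n) : Prop := ∀ y, ¬ Q.arr z y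

/-- `z` is a source: no arrow ends at `z`. -/
def IsSourceQ {n : ℕ} (Q : TypeAQuiver n) (z : Fin n) : Prop := ∀ y, ¬ Q.arr y z

/-- `Supp I(z)`: the set of vertices admitting a directed path to `z` in `Q`. -/
def SuppI {n : ℕ} (Q : TypeAQuiver n) (z : Fin n) : Set (Fin n) :=
  {x | Relation.ReflTransGen Q.arr x z}

/-- The arrow relation of the quiver `Q^F` obtained from `Q` by adding the extra
arrows in `F` (an extra arrow is recorded as the pair (source, target)). -/
def QFarr {n : ℕ} (Q : TypeAQuiver n) (F : Set (Fin n × Fin n)) :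
    Fin n → Fin n → Prop :=
  fun x y => Q.arr x y ∨ (x, y) ∈ F

/-- `F` is an alien set for the type `A_n` quiver `Q`. -/
structure IsAlienSet {n : ℕ} (Q : TypeAQuiver n) (F : Set (Fin n × Fin n)) : Prop where
  /-- (a) Source and target of each extra arrow lie in `Supp I(z)` for some sink `z`. -/
  sameSupp : ∀ p ∈ F, ∃ z : Fin n, IsSinkQ Q z ∧ p.1 ∈ SuppI Q z ∧ p.2 ∈ SuppI Q z
  /-- (b) The target of an extra arrow is not a source of `Q`, unless it is extremal. -/
  targetNotSource : ∀ p ∈ F, IsSourceQ Q p.2 → (p.2.val = 0 ∨ p.2.val = n - 1)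
  /-- (c) Each extra arrow is the unique directed path in `Q^F` from its source to
  its target: every such path is the single arrow itself. -/
  uniquePath : ∀ p ∈ F, ∀ l : List (Fin n),
    List.Chain (QFarr Q F) p.1 (l ++ [p.2]) → l = []
  /-- (d) `Q^F` is acyclic. -/
  acyclic : ∀ x : Fin n, ¬ Relation.TransGen (QFarr Q F) x x

/-- The order relation of the poset `P_{Q^F}` associated to the acyclic quiver
`Q^F`: `x ≤ y` iff there is a (possibly trivial) directed path from `x` to `y`. -/
def leQF {n : ℕ} (Q : TypeAQuiver n) (F : Set (Fin n × Fin n)) :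
    Fin n → Fin n → Prop :=
  Relation.ReflTransGen (QFarr Q F)


section
variable {P : Type*} [PartialOrder P]

/-- neighbor relation on maximal elements -/
def NbRel (z w : P) : Prop :=
  RIsMax (fun x y : P => x ≤ y) z ∧ RIsMax (fun x y : P => x ≤ y) w ∧ z ≠ w ∧
    ∃ x : P, x ≤ z ∧ x ≤ w

lemma rlt_of_le_ne {u v : P} (h : u ≤ v) (hne : u ≠ v) :
    RLt (fun x y : P => x ≤ y) u v :=
  ⟨h, fun h' => hne (le_antisymm h h')⟩

lemma ne_max_aux {u a b : P} (hb : RIsMax (fun x y : P => x ≤ y) b)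
    (hab : a ≠ b) (h1 : u ≤ a) : u ≠ b := by
  intro h; subst h
  exact hab (le_antisymm (hb a h1) h1)

lemma fin_key (n : ℕ) (j : Fin (n+2)) :
    ((j+1 : Fin (n+2))).val = (j.val + 1) % (n+2) := by
  rw [Fin.add_def]; simp

lemma fin_succ_ne (n : ℕ) (i : Fin (n+2)) : i ≠ i + 1 := by
  have k1 := fin_key n i
  have hi := i.isLt
  simp only [Fin.ne_iff_vne]
  rcases Nat.lt_or_ge (i.val + 1) (n+2) with h' | h'
  · rw [Nat.mod_eq_of_lt h'] at k1; omega
  · have : i.val + 1 = n + 2 := by omega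
    rw [this, Nat.mod_self] at k1; omega

lemma fin_succ_succ_ne (n : ℕ) (hn : 1 ≤ n) (i : Fin (n+2)) : i ≠ i + 1 + 1 := by
  have k1 := fin_key n i
  have k2 := fin_key n (i+1)
  have hi := i.isLt
  have hi1 := (i+1).isLt
  have m1 : (i.val + 1) % (n+2) = if i.val + 1 = n + 2 then 0 else i.val + 1 := by
    split_ifs with h'
    · rw [h', Nat.mod_self]
    · exact Nat.mod_eq_of_lt (by omega)
  have m2 : ((i+1 : Fin (n+2)).val + 1) % (n+2)
      = if (i+1 : Fin (n+2)).val + 1 = n + 2 then 0 else (i+1: Fin (n+2)).val + 1 := by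
    split_ifs with h'
    · rw [h', Nat.mod_self]
    · exact Nat.mod_eq_of_lt (by omega)
  simp only [Fin.ne_iff_vne]
  split_ifs at m1 m2 <;> omega

lemma fin_sub_one_ne (n : ℕ) (i : Fin (n+2)) : i - 1 ≠ i := by
  intro h
  have h2 := congrArg (· + 1) h
  simp only [sub_add_cancel] at h2
  exact fin_succ_ne n i h2

lemma fin_sub_sub_ne (n : ℕ) (hn : 1 ≤ n) (i : Fin (n+2)) : i - 1 - 1 ≠ i := by
  intro h
  have h2 := congrArg (· + 1 + 1) h
  simp only [sub_add_cancel] at h2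
  exact fin_succ_succ_ne n hn i h2

/-- A cycle of length ≥ 3 in the neighbor relation yields a contradiction. -/
lemma no_cycle
    (hR3 : ¬ ContainsR3 (fun x y : P => x ≤ y))
    (hCr : ∀ k, ¬ ContainsCrown (fun x y : P => x ≤ y) k)
    (n : ℕ) (hn : 1 ≤ n) (z : Fin (n+2) → P) (hinj : Function.Injective z)
    (hmax : ∀ i, RIsMax (fun x y : P => x ≤ y) (z i))
    (hnb : ∀ i : Fin (n+2), ∃ x : P, x ≤ z i ∧ x ≤ z (i+1)) : False := by
  classical
  -- choose witnesses x i ≤ z (i-1), x i ≤ z i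
  have hnb2 : ∀ i : Fin (n+2), ∃ u : P, u ≤ z (i-1) ∧ u ≤ z i := by
    intro i
    obtain ⟨u, h1, h2⟩ := hnb (i-1)
    rw [sub_add_cancel] at h2
    exact ⟨u, h1, h2⟩
  set x : Fin (n+2) → P := fun i => (hnb2 i).choose with hxdef
  have hx : ∀ i : Fin (n+2), x i ≤ z (i-1) ∧ x i ≤ z i := fun i => (hnb2 i).choose_spec
  -- basic distinctness
  have zinj_ne : ∀ {a b : Fin (n+2)}, a ≠ b → z a ≠ z b :=
    fun h => fun he => h (hinj he)
  have xnez : ∀ i j, x i ≠ z j := by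
    intro i j
    by_cases hji : j = i
    · subst hji
      exact ne_max_aux (hmax j) (zinj_ne (fin_sub_one_ne n j)) (hx j).1
    · exact ne_max_aux (hmax j) (zinj_ne fun h => hji h.symm) (hx i).2
  -- no R3 triple
  have triple : ∀ (u : P) (a b c : Fin (n+2)), a ≠ b → a ≠ c → b ≠ c →
      u ≠ z a → u ≠ z b → u ≠ z c →
      u ≤ z a → u ≤ z b → u ≤ z c → False := by
    intro u a b c hab hac hbc hna hnb' hnc h1 h2 h3
    exact hR3 ⟨z a, z b, z c, u, hmax a, hmax b, hmax c,
      zinj_ne hab, zinj_ne hac, zinj_ne hbc,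
      rlt_of_le_ne h1 hna, rlt_of_le_ne h2 hnb', rlt_of_le_ne h3 hnc⟩
  -- pairwise non-comparability
  have nle : ∀ i j : Fin (n+2), i ≠ j → ¬ x i ≤ x j := by
    intro i j hij h
    have hzj : x i ≤ z j := h.trans (hx j).2
    have hzj1 : x i ≤ z (j-1) := h.trans (hx j).1
    by_cases hji : j = i - 1
    · subst hji
      exact triple (x i) i (i-1) (i-1-1)
        (Ne.symm (fin_sub_one_ne n i))
        (Ne.symm (fin_sub_sub_ne n hn i))
        (fin_sub_one_ne n (i-1)).symm
        (xnez i i) (xnez i (i-1)) (xnez i (i-1-1))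
        (hx i).2 (hx i).1 hzj1
    · exact triple (x i) i (i-1) j
        (Ne.symm (fin_sub_one_ne n i))
        hij
        (fun h' => hji h'.symm)
        (xnez i i) (xnez i (i-1)) (xnez i j)
        (hx i).2 (hx i).1 hzj
  have xinj : Function.Injective x := by
    intro i j h
    by_contra hij
    exact nle i j hij (le_of_eq h)
  apply hCr n
  refine ⟨z, x, hinj, xinj, hmax, xnez, ?_, ?_⟩
  · intro i j hij
    exact ⟨nle i j hij, nle j i (Ne.symm hij)⟩
  · intro i j
    constructor
    · intro hlt
      by_contra hcon
      push_neg at hcon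
      exact triple (x i) j i (i-1)
        (hcon.1) (hcon.2) (Ne.symm (fin_sub_one_ne n i))
        (xnez i j) (xnez i i) (xnez i (i-1))
        hlt.1 (hx i).2 (hx i).1
    · intro h
      rcases h with h | h
      · rw [h]; exact rlt_of_le_ne (hx i).2 (xnez i i)
      · rw [h]; exact rlt_of_le_ne (hx i).1 (xnez i (i-1))

end

section Main
variable {Q : Type*} [Fintype Q] [PartialOrder Q]

lemma exists_max_above (a : Q) : ∃ z : Q, RIsMax (fun x y : Q => x ≤ y) z ∧ a ≤ z := by
  obtain ⟨b, hab, hb⟩ := Finite.exists_le_maximal (a := a) (p := fun _ : Q => True) trivial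
  exact ⟨b, fun c hc => hb.2 trivial hc, hab⟩

lemma nb_connected (hc : RConnected (fun x y : Q => x ≤ y))
    {z w : Q} (hz : RIsMax (fun x y : Q => x ≤ y) z)
    (hw : RIsMax (fun x y : Q => x ≤ y) w) :
    Relation.ReflTransGen (NbRel (P := Q)) z w := by
  classical
  choose M hM1 hM2 using fun a : Q => exists_max_above a
  have key : ∀ u v : Q,
      Relation.ReflTransGen (RCompGraph (fun x y : Q => x ≤ y)).Adj u v →
      Relation.ReflTransGen (NbRel (P := Q)) (M u) (M v) := by
    intro u v h
    induction h with
    | refl => exact Relation.ReflTransGen.refl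
    | @tail b c hub hadj ih =>
      refine ih.trans ?_
      obtain ⟨hne, hcmp⟩ : b ≠ c ∧ (b ≤ c ∨ c ≤ b) := hadj
      by_cases he : M b = M c
      · rw [he]
      · refine Relation.ReflTransGen.single ?_
        rcases hcmp with h' | h'
        · exact ⟨hM1 _, hM1 _, he, b, hM2 b, h'.trans (hM2 _)⟩
        · exact ⟨hM1 _, hM1 _, he, c, h'.trans (hM2 _), hM2 _⟩
  have hrtg : Relation.ReflTransGen (RCompGraph (fun x y : Q => x ≤ y)).Adj z w :=
    (SimpleGraph.reachable_iff_reflTransGen _ _).mp (hc.preconnected z w)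
  have h := key z w hrtg
  have hz' : M z = z := le_antisymm (hz _ (hM2 z)) (hM2 z)
  have hw' : M w = w := le_antisymm (hw _ (hM2 w)) (hM2 w)
  rwa [hz', hw'] at h

end Main

/-- A poset of type `A` with at least two maximal elements has a
maximal element with exactly one neighbor. -/
theorem exists_max_with_unique_neighbor {P : Type*} [Fintype P] [PartialOrder P]
    (hA : IsTypeA (fun x y : P => x ≤ y))
    (htwo : ∃ z w : P, RIsMax (fun x y : P => x ≤ y) z ∧
      RIsMax (fun x y : P => x ≤ y) w ∧ z ≠ w) :
    ∃ z : P, RIsMax (fun x y : P => x ≤ y) z ∧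
      ∃! z' : P, z' ∈ NeighborSet (fun x y : P => x ≤ y) z := by
  classical
  obtain ⟨z0, w0, hz0, hw0, hne0⟩ := htwo
  have hreach := nb_connected hA.1 hz0 hw0
  obtain ⟨c, hc⟩ : ∃ c, NbRel z0 c := by
    rcases Relation.ReflTransGen.cases_head hreach with rfl | ⟨c, h1, _⟩
    · exact absurd rfl hne0
    · exact ⟨c, h1⟩
  -- lengths of simple `NbRel`-paths
  set L : Set ℕ :=
    {k | ∃ l : List P, (2 ≤ l.length ∧ l.Nodup ∧ l.Chain' NbRel) ∧ l.length = k} with hLdef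
  have hLne : L.Nonempty := by
    refine ⟨2, [z0, c], ⟨by simp, ?_, ?_⟩, rfl⟩
    · simp [hc.2.2.1]
    · exact List.isChain_pair.mpr hc
  have hLbdd : BddAbove L := by
    refine ⟨Fintype.card P, ?_⟩
    rintro k ⟨l, hl, rfl⟩
    exact hl.2.1.length_le_card
  obtain ⟨l, hlS, hlen⟩ := Nat.sSup_mem hLne hLbdd
  have hmaxlen : ∀ l' : List P, 2 ≤ l'.length → l'.Nodup → l'.Chain' NbRel →
      l'.length ≤ l.length := by
    intro l' h1 h2 h3
    rw [hlen]
    exact le_csSup hLbdd ⟨l', ⟨h1, h2, h3⟩, rfl⟩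
  clear hlen hLbdd hLne hLdef
  rcases l with _ | ⟨a, l2⟩
  · simp at hlS
  rcases l2 with _ | ⟨b, t⟩
  · simp at hlS
  obtain ⟨-, hnodup, hchain⟩ := hlS
  have hab : NbRel a b := (List.isChain_cons_cons.mp hchain).1
  refine ⟨a, hab.1, b, ⟨hab.2.1, fun h => hab.2.2.1 h.symm, ?_⟩, ?_⟩
  · obtain ⟨x, hx1, hx2⟩ := hab.2.2.2
    exact ⟨x, hx1, hx2⟩
  intro w hw
  obtain ⟨hwmax, hwa, x, hx⟩ := hw
  have hxa : x ≤ a := hx.1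
  have hxw : x ≤ w := hx.2
  by_contra hwb
  have hNwa : NbRel w a := ⟨hwmax, hab.1, hwa, x, hxw, hxa⟩
  by_cases hwl : w ∈ (a :: b :: t)
  · -- w occurs on the path: we get a cycle, contradicting `no_cycle`
    obtain ⟨⟨i, hi⟩, hget⟩ := List.mem_iff_get.mp hwl
    have hi0 : i ≠ 0 := by
      rintro rfl
      exact hwa (hget.symm)
    have hi1 : i ≠ 1 := by
      rintro rfl
      exact hwb (hget.symm)
    obtain ⟨n, rfl⟩ : ∃ n, i = n + 2 := ⟨i - 2, by omega⟩
    set Lst : List P := a :: b :: t with hLst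
    have hlenL : n + 2 < Lst.length := hi
    -- the cyclic family of maximal elements
    have hvlt : ∀ k : Fin (n + 3), k.val < Lst.length := fun k => lt_of_le_of_lt
      (by omega : k.val ≤ n + 2) hlenL
    set z : Fin (n + 3) → P := fun k => Lst.get ⟨k.val, hvlt k⟩ with hzdef
    have hinj : Function.Injective z := by
      intro k k' hkk
      have h2 := (hnodup.get_inj_iff).mp hkk
      have h3 : k.val = k'.val := by simpa [Fin.ext_iff] using h2
      exact Fin.ext h3
    have hcg := List.isChain_iff_getElem.mp hchain
    have hz0' : z 0 = a := rfl
    have hzi : z ⟨n + 2, by omega⟩ = w := by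
      rw [hzdef]
      exact hget
    have hNB : ∀ k : Fin (n + 3), NbRel (z k) (z (k + 1)) := by
      intro k
      have hkey := fin_key (n + 1) k
      by_cases hk : k.val = n + 2
      · have hv1 : (k + 1 : Fin (n + 3)).val = 0 := by
          rw [hkey, hk, Nat.mod_self]
        have e1 : z k = w := by
          rw [← hzi]
          congr 1
          simp [Fin.ext_iff, hk]
        have e2 : z (k + 1) = a := by
          rw [← hz0']
          congr 1
          simp [Fin.ext_iff, hv1]
        rw [e1, e2]
        exact hNwa
      · have hklt : k.val + 1 < n + 3 := by
          have := k.isLt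
          omega
        have hv1 : (k + 1 : Fin (n + 3)).val = k.val + 1 := by
          rw [hkey]
          exact Nat.mod_eq_of_lt hklt
        have hlt2 : k.val < Lst.length - 1 := by omega
        have hstep := hcg k.val (by omega)
        have e2 : z (k + 1) = Lst.get ⟨k.val + 1, by omega⟩ := by
          rw [hzdef]
          congr 1
          simp [Fin.ext_iff, hv1]
        rw [e2]
        exact hstep
    exact no_cycle hA.2.2.2.1 hA.2.2.2.2 (n + 1) (by omega) z hinj
      (fun k => (hNB k).1) (fun k => (hNB k).2.2.2)
  · -- w is not on the path: extend the path, contradicting maximality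
    have hlong : (w :: a :: b :: t).length ≤ (a :: b :: t).length := by
      refine hmaxlen _ (by simp) ?_ ?_
      · exact List.nodup_cons.mpr ⟨hwl, hnodup⟩
      · exact List.isChain_cons_cons.mpr ⟨hNwa, hchain⟩
    simp at hlong
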